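/- Every prismatic graph of parallel-square type admits a hitting set of its triangles of cardinality at most 4. -/

import Mathlib

/-- A graph is prismatic if for every triangle, every vertex not in the triangle
has exactly one neighbour in the triangle. -/
def Prismatic {V : Type*} (G : SimpleGraph V) : Prop :=
  ∀ a b c v : V, G.Adj a b → G.Adj a c → G.Adj b c →
    v ≠ a → v ≠ b → v ≠ c → ∃! u, u ∈ ({a, b, c} : Set V) ∧ G.Adj v u

/-- The line graph of K_{3,3}: vertices are the edges (i,j) of K_{3,3}; two edges are
adjacent iff they are distinct and share an endpoint. -/
def LineK33 : SimpleGraph (Fin 3 × Fin 3) where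
  Adj e f := e ≠ f ∧ (e.1 = f.1 ∨ e.2 = f.2)
  symm := ⟨by
    rintro e f ⟨h1, h2⟩
    exact ⟨h1.symm, h2.imp Eq.symm Eq.symm⟩⟩
  loopless := ⟨fun e h => h.1 rfl⟩

lemma psht_fin3_cases (k k₁ k₂ k₃ : Fin 3) (h1 : k₁ ≠ k₂) (h2 : k₃ ≠ k₁) (h3 : k₃ ≠ k₂) :
    k = k₁ ∨ k = k₂ ∨ k = k₃ := by omega

lemma psht_lineK33_adj (e f : Fin 3 × Fin 3) :
    LineK33.Adj e f ↔ e ≠ f ∧ (e.1 = f.1 ∨ e.2 = f.2) := Iff.rfl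

lemma psht_classify (i₁ i₂ i₃ j₁ j₂ j₃ : Fin 3)
    (hi12 : i₁ ≠ i₂) (hi31 : i₃ ≠ i₁) (hi32 : i₃ ≠ i₂)
    (hj12 : j₁ ≠ j₂) (hj31 : j₃ ≠ j₁) (hj32 : j₃ ≠ j₂)
    (v : Fin 3 × Fin 3)
    (h1 : v ≠ (i₁, j₃)) (h2 : v ≠ (i₂, j₃)) (h3 : v ≠ (i₃, j₁)) (h4 : v ≠ (i₃, j₂))
    (h5 : v ≠ (i₃, j₃)) :
    v = (i₁, j₁) ∨ v = (i₁, j₂) ∨ v = (i₂, j₁) ∨ v = (i₂, j₂) := by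
  obtain ⟨a, b⟩ := v
  rcases psht_fin3_cases a i₁ i₂ i₃ hi12 hi31 hi32 with rfl | rfl | rfl <;>
    rcases psht_fin3_cases b j₁ j₂ j₃ hj12 hj31 hj32 with rfl | rfl | rfl <;>
      simp_all [Prod.ext_iff]

lemma psht_no_z_adj (i₁ i₂ i₃ j₁ j₂ j₃ : Fin 3)
    (hi31 : i₃ ≠ i₁) (hi32 : i₃ ≠ i₂) (hj31 : j₃ ≠ j₁) (hj32 : j₃ ≠ j₂)
    (b : Fin 3 × Fin 3)
    (hb : b = (i₁, j₁) ∨ b = (i₁, j₂) ∨ b = (i₂, j₁) ∨ b = (i₂, j₂))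
    (h : LineK33.Adj (i₃, j₃) b) : False := by
  rcases hb with rfl | rfl | rfl | rfl <;>
    simp_all [psht_lineK33_adj, Prod.ext_iff]

lemma psht_no_X_triangle (i₁ i₂ j₁ j₂ : Fin 3) (hi : i₁ ≠ i₂) (hj : j₁ ≠ j₂)
    (a b c : Fin 3 × Fin 3) (fa fb fc : ℤ)
    (ha : a = (i₁, j₁) ∨ a = (i₁, j₂) ∨ a = (i₂, j₁) ∨ a = (i₂, j₂))
    (hb : b = (i₁, j₁) ∨ b = (i₁, j₂) ∨ b = (i₂, j₁) ∨ b = (i₂, j₂))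
    (hc : c = (i₁, j₁) ∨ c = (i₁, j₂) ∨ c = (i₂, j₁) ∨ c = (i₂, j₂))
    (Hab : a ≠ b ∧ ((LineK33.Adj a b ∧ fa = fb) ∨ (¬ LineK33.Adj a b ∧ fa ≠ fb)))
    (Hac : a ≠ c ∧ ((LineK33.Adj a c ∧ fa = fc) ∨ (¬ LineK33.Adj a c ∧ fa ≠ fc)))
    (Hbc : b ≠ c ∧ ((LineK33.Adj b c ∧ fb = fc) ∨ (¬ LineK33.Adj b c ∧ fb ≠ fc))) :
    False := by
  rcases ha with rfl | rfl | rfl | rfl <;>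
    rcases hb with rfl | rfl | rfl | rfl <;>
      rcases hc with rfl | rfl | rfl | rfl <;>
        simp_all [psht_lineK33_adj, Prod.ext_iff] <;> omega

/-- Every prismatic graph of parallel-square type admits a hitting set of the triangles
of cardinality at most 4.  Here X is the edge set of a 4-cycle of K_{3,3} (given by rows
i₁ ≠ i₂ and columns j₁ ≠ j₂), z = (i₃,j₃) is the edge of K_{3,3} disjoint from X, and
G is obtained from the line graph of K_{3,3} by multiplying X (encoded by the projection
π : W → Fin 3 × Fin 3 and integer map φ), possibly deleting z (the fibre over z has at
most one element, all other fibres over vertices outside X are singletons). -/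
theorem parallel_square_hitting_card_le_four {W : Type*}
    (i₁ i₂ i₃ j₁ j₂ j₃ : Fin 3)
    (hi : i₁ ≠ i₂ ∧ i₃ ≠ i₁ ∧ i₃ ≠ i₂) (hj : j₁ ≠ j₂ ∧ j₃ ≠ j₁ ∧ j₃ ≠ j₂)
    (X : Set (Fin 3 × Fin 3))
    (hX : X = {(i₁, j₁), (i₁, j₂), (i₂, j₁), (i₂, j₂)})
    (G : SimpleGraph W) (π : W → Fin 3 × Fin 3) (φ : W → ℤ)
    (hπ : ∀ v : Fin 3 × Fin 3, v ∉ X → v ≠ (i₃, j₃) → ∃! w : W, π w = v)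
    (hz : ∀ w w' : W, π w = (i₃, j₃) → π w' = (i₃, j₃) → w = w')
    (hφ : ∀ w w' : W, π w = π w' → φ w = φ w' → w = w')
    (hadj₁ : ∀ w w' : W, (π w ∉ X ∨ π w' ∉ X) →
      (G.Adj w w' ↔ LineK33.Adj (π w) (π w')))
    (hadj₂ : ∀ w w' : W, π w ∈ X → π w' ∈ X →
      (G.Adj w w' ↔ (π w ≠ π w' ∧
        ((LineK33.Adj (π w) (π w') ∧ φ w = φ w') ∨
         (¬ LineK33.Adj (π w) (π w') ∧ φ w ≠ φ w')))))
    (hG : Prismatic G) :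
    ∃ S : Finset W, S.card ≤ 4 ∧
      ∀ p q r : W, G.Adj p q → G.Adj p r → G.Adj q r →
        (p ∈ S ∨ q ∈ S ∨ r ∈ S) := by
  classical
  obtain ⟨hi12, hi31, hi32⟩ := hi
  obtain ⟨hj12, hj31, hj32⟩ := hj
  -- the four distinguished non-X, non-z vertices have singleton fibres
  have hn1 : (i₁, j₃) ∉ X ∧ (i₁, j₃) ≠ (i₃, j₃) := by
    constructor
    · rw [hX]; simp [Prod.ext_iff]; omega
    · simp [Prod.ext_iff]; omega
  have hn2 : (i₂, j₃) ∉ X ∧ (i₂, j₃) ≠ (i₃, j₃) := by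
    constructor
    · rw [hX]; simp [Prod.ext_iff]; omega
    · simp [Prod.ext_iff]; omega
  have hn3 : (i₃, j₁) ∉ X ∧ (i₃, j₁) ≠ (i₃, j₃) := by
    constructor
    · rw [hX]; simp [Prod.ext_iff]; omega
    · simp [Prod.ext_iff]; omega
  have hn4 : (i₃, j₂) ∉ X ∧ (i₃, j₂) ≠ (i₃, j₃) := by
    constructor
    · rw [hX]; simp [Prod.ext_iff]; omega
    · simp [Prod.ext_iff]; omega
  obtain ⟨w₁, hw₁, hu₁⟩ := hπ (i₁, j₃) hn1.1 hn1.2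
  obtain ⟨w₂, hw₂, hu₂⟩ := hπ (i₂, j₃) hn2.1 hn2.2
  obtain ⟨w₃, hw₃, hu₃⟩ := hπ (i₃, j₁) hn3.1 hn3.2
  obtain ⟨w₄, hw₄, hu₄⟩ := hπ (i₃, j₂) hn4.1 hn4.2
  refine ⟨{w₁, w₂, w₃, w₄}, ?_, ?_⟩
  · have h1 := Finset.card_insert_le w₁ ({w₂, w₃, w₄} : Finset W)
    have h2 := Finset.card_insert_le w₂ ({w₃, w₄} : Finset W)
    have h3 := Finset.card_insert_le w₃ ({w₄} : Finset W)
    have h4 : ({w₄} : Finset W).card = 1 := Finset.card_singleton w₄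
    omega
  intro p q r hpq hpr hqr
  by_contra hcon
  push_neg at hcon
  obtain ⟨hpS, hqS, hrS⟩ := hcon
  have mem : ∀ w : W,
      (π w = (i₁, j₃) ∨ π w = (i₂, j₃) ∨ π w = (i₃, j₁) ∨ π w = (i₃, j₂)) →
      w ∈ ({w₁, w₂, w₃, w₄} : Finset W) := by
    rintro w (h | h | h | h)
    · simp [hu₁ w h]
    · simp [hu₂ w h]
    · simp [hu₃ w h]
    · simp [hu₄ w h]
  have hp' : π p ≠ (i₁, j₃) ∧ π p ≠ (i₂, j₃) ∧ π p ≠ (i₃, j₁) ∧ π p ≠ (i₃, j₂) := by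
    refine ⟨?_, ?_, ?_, ?_⟩ <;> intro h <;> exact hpS (mem p (by tauto))
  have hq' : π q ≠ (i₁, j₃) ∧ π q ≠ (i₂, j₃) ∧ π q ≠ (i₃, j₁) ∧ π q ≠ (i₃, j₂) := by
    refine ⟨?_, ?_, ?_, ?_⟩ <;> intro h <;> exact hqS (mem q (by tauto))
  have hr' : π r ≠ (i₁, j₃) ∧ π r ≠ (i₂, j₃) ∧ π r ≠ (i₃, j₁) ∧ π r ≠ (i₃, j₂) := by
    refine ⟨?_, ?_, ?_, ?_⟩ <;> intro h <;> exact hrS (mem r (by tauto))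
  have hzX : (i₃, j₃) ∉ X := by rw [hX]; simp [Prod.ext_iff]; omega
  -- no triangle vertex can sit over z
  have hzadj : ∀ w w' : W, G.Adj w w' → π w = (i₃, j₃) →
      (π w' ≠ (i₁, j₃) ∧ π w' ≠ (i₂, j₃) ∧ π w' ≠ (i₃, j₁) ∧ π w' ≠ (i₃, j₂)) →
      False := by
    intro w w' hadj hwz hn
    by_cases hw'z : π w' = (i₃, j₃)
    · exact G.ne_of_adj hadj (hz w w' hwz hw'z)
    · have hb := psht_classify i₁ i₂ i₃ j₁ j₂ j₃ hi12 hi31 hi32 hj12 hj31 hj32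
        (π w') hn.1 hn.2.1 hn.2.2.1 hn.2.2.2 hw'z
      have hA : LineK33.Adj (π w) (π w') :=
        (hadj₁ w w' (Or.inl (by rw [hwz]; exact hzX))).mp hadj
      rw [hwz] at hA
      exact psht_no_z_adj i₁ i₂ i₃ j₁ j₂ j₃ hi31 hi32 hj31 hj32 (π w') hb hA
  by_cases hpz : π p = (i₃, j₃)
  · exact hzadj p q hpq hpz hq'
  by_cases hqz : π q = (i₃, j₃)
  · exact hzadj q r hqr hqz hr'
  by_cases hrz : π r = (i₃, j₃)
  · exact hzadj r p hpr.symm hrz hp'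
  have ha := psht_classify i₁ i₂ i₃ j₁ j₂ j₃ hi12 hi31 hi32 hj12 hj31 hj32
    (π p) hp'.1 hp'.2.1 hp'.2.2.1 hp'.2.2.2 hpz
  have hb := psht_classify i₁ i₂ i₃ j₁ j₂ j₃ hi12 hi31 hi32 hj12 hj31 hj32
    (π q) hq'.1 hq'.2.1 hq'.2.2.1 hq'.2.2.2 hqz
  have hc := psht_classify i₁ i₂ i₃ j₁ j₂ j₃ hi12 hi31 hi32 hj12 hj31 hj32
    (π r) hr'.1 hr'.2.1 hr'.2.2.1 hr'.2.2.2 hrz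
  have hXp : π p ∈ X := by rw [hX]; rcases ha with h | h | h | h <;> simp [h]
  have hXq : π q ∈ X := by rw [hX]; rcases hb with h | h | h | h <;> simp [h]
  have hXr : π r ∈ X := by rw [hX]; rcases hc with h | h | h | h <;> simp [h]
  exact psht_no_X_triangle i₁ i₂ j₁ j₂ hi12 hj12 (π p) (π q) (π r) (φ p) (φ q) (φ r)
    ha hb hc
    ((hadj₂ p q hXp hXq).mp hpq) ((hadj₂ p r hXp hXr).mp hpr)
    ((hadj₂ q r hXq hXr).mp hqr)
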